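/- Let p > 2 be a real number. Then for all real numbers u₁, u₂, one has (|u₁|^{p−2}u₁ − |u₂|^{p−2}u₂)(u₁ − u₂) ≥ 2^{1−p} |u₁ − u₂|^p. -/
import Mathlib

/-- Superadditivity of `x ^ q` for `q ≥ 1` on nonnegative reals. -/
lemma aux_rpow_superadd {q : ℝ} (hq : 1 ≤ q) {x y : ℝ} (hx : 0 ≤ x) (hy : 0 ≤ y) :
    x ^ q + y ^ q ≤ (x + y) ^ q := by
  have h := NNReal.add_rpow_le_rpow_add x.toNNReal y.toNNReal hq
  have h' := NNReal.coe_le_coe.2 h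
  simpa [NNReal.coe_rpow, Real.coe_toNNReal _ hx, Real.coe_toNNReal _ hy,
    Real.coe_toNNReal _ (add_nonneg hx hy)] using h'

/-- `|u|^(p-2) * u = u^(p-1)` for `u ≥ 0`. -/
lemma aux_phi_eq {p : ℝ} (hp : 2 < p) {u : ℝ} (hu : 0 ≤ u) :
    |u| ^ (p - 2) * u = u ^ (p - 1) := by
  rcases hu.eq_or_lt with h | h
  · rw [← h]
    simp [Real.zero_rpow (by linarith : p - 1 ≠ 0)]
  · rw [abs_of_pos h]
    rw [show p - 1 = (p - 2) + 1 by ring, Real.rpow_add h, Real.rpow_one]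

/-- Case `0 ≤ b ≤ a`. -/
lemma aux_key_nonneg {p : ℝ} (hp : 2 < p) {a b : ℝ} (hb : 0 ≤ b) (hba : b ≤ a) :
    (2 : ℝ) ^ (1 - p) * (a - b) ^ (p - 1) ≤ |a| ^ (p - 2) * a - |b| ^ (p - 2) * b := by
  have ha : 0 ≤ a := hb.trans hba
  rw [aux_phi_eq hp hb, aux_phi_eq hp ha]
  have h1 : b ^ (p - 1) + (a - b) ^ (p - 1) ≤ a ^ (p - 1) := by
    have := aux_rpow_superadd (by linarith : (1 : ℝ) ≤ p - 1) hb (by linarith : (0 : ℝ) ≤ a - b)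
    simpa using this
  have h2 : (2 : ℝ) ^ (1 - p) ≤ 1 :=
    Real.rpow_le_one_of_one_le_of_nonpos (by norm_num) (by linarith)
  have h3 : (0 : ℝ) ≤ (a - b) ^ (p - 1) := Real.rpow_nonneg (by linarith) _
  have h4 : (2 : ℝ) ^ (1 - p) * (a - b) ^ (p - 1) ≤ 1 * (a - b) ^ (p - 1) :=
    mul_le_mul_of_nonneg_right h2 h3
  linarith

/-- Case `b ≤ 0 ≤ a`. -/
lemma aux_key_mixed {p : ℝ} (hp : 2 < p) {a b : ℝ} (hb : b ≤ 0) (ha : 0 ≤ a) :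
    (2 : ℝ) ^ (1 - p) * (a - b) ^ (p - 1) ≤ |a| ^ (p - 2) * a - |b| ^ (p - 2) * b := by
  have hφb : |b| ^ (p - 2) * b = -((-b) ^ (p - 1)) := by
    have := aux_phi_eq hp (by linarith : (0 : ℝ) ≤ -b)
    rw [abs_neg] at this
    nlinarith [this]
  rw [aux_phi_eq hp ha, hφb]
  set m := max a (-b) with hm
  have hm0 : 0 ≤ m := le_max_of_le_left ha
  have hab : a - b ≤ 2 * m := by
    have h1 : a ≤ m := le_max_left _ _
    have h2 : -b ≤ m := le_max_right _ _
    linarith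
  have hq : (0 : ℝ) ≤ p - 1 := by linarith
  have step1 : (a - b) ^ (p - 1) ≤ (2 * m) ^ (p - 1) :=
    Real.rpow_le_rpow (by linarith) hab hq
  have step2 : (2 * m) ^ (p - 1) = 2 ^ (p - 1) * m ^ (p - 1) :=
    Real.mul_rpow (by norm_num) hm0
  have step3 : m ^ (p - 1) ≤ a ^ (p - 1) + (-b) ^ (p - 1) := by
    rcases max_cases a (-b) with ⟨h, _⟩ | ⟨h, _⟩
    · rw [hm, h]
      have : 0 ≤ (-b) ^ (p - 1) := Real.rpow_nonneg (by linarith) _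
      linarith
    · rw [hm, h]
      have : 0 ≤ a ^ (p - 1) := Real.rpow_nonneg ha _
      linarith
  have hpow : (2 : ℝ) ^ (1 - p) * 2 ^ (p - 1) = 1 := by
    rw [← Real.rpow_add (by norm_num : (0:ℝ) < 2)]
    norm_num
  have h2p : (0 : ℝ) < (2 : ℝ) ^ (1 - p) := Real.rpow_pos_of_pos (by norm_num) _
  calc (2 : ℝ) ^ (1 - p) * (a - b) ^ (p - 1)
      ≤ (2 : ℝ) ^ (1 - p) * ((2 * m) ^ (p - 1)) := by
        exact mul_le_mul_of_nonneg_left step1 h2p.le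
    _ = ((2 : ℝ) ^ (1 - p) * 2 ^ (p - 1)) * m ^ (p - 1) := by rw [step2]; ring
    _ = m ^ (p - 1) := by rw [hpow, one_mul]
    _ ≤ a ^ (p - 1) + (-b) ^ (p - 1) := step3
    _ = a ^ (p - 1) - -((-b) ^ (p - 1)) := by ring

/-- Slope bound for `b ≤ a`. -/
lemma aux_key {p : ℝ} (hp : 2 < p) {a b : ℝ} (hba : b ≤ a) :
    (2 : ℝ) ^ (1 - p) * (a - b) ^ (p - 1) ≤ |a| ^ (p - 2) * a - |b| ^ (p - 2) * b := by
  rcases le_total 0 b with hb | hb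
  · exact aux_key_nonneg hp hb hba
  rcases le_total a 0 with ha | ha
  · have h := aux_key_nonneg hp (by linarith : (0:ℝ) ≤ -a) (by linarith : -a ≤ -b)
    rw [abs_neg, abs_neg] at h
    have e : -b - -a = a - b := by ring
    rw [e] at h
    nlinarith [h]
  · exact aux_key_mixed hp hb ha

/-- Full inequality for `b ≤ a`. -/
lemma aux_main {p : ℝ} (hp : 2 < p) {a b : ℝ} (hba : b ≤ a) :
    (2 : ℝ) ^ (1 - p) * |a - b| ^ p ≤
      (|a| ^ (p - 2) * a - |b| ^ (p - 2) * b) * (a - b) := by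
  have hab : 0 ≤ a - b := by linarith
  rw [abs_of_nonneg hab]
  have hsplit : (a - b) ^ p = (a - b) ^ (p - 1) * (a - b) := by
    have h := Real.rpow_add' hab (show p - 1 + 1 ≠ 0 by linarith)
    rw [Real.rpow_one, show p - 1 + 1 = p by ring] at h
    exact h
  rw [hsplit]
  have h := aux_key hp hba
  calc (2 : ℝ) ^ (1 - p) * ((a - b) ^ (p - 1) * (a - b))
      = ((2 : ℝ) ^ (1 - p) * (a - b) ^ (p - 1)) * (a - b) := by ring
    _ ≤ (|a| ^ (p - 2) * a - |b| ^ (p - 2) * b) * (a - b) :=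
        mul_le_mul_of_nonneg_right h hab

/-- Elementary inequality: for a real exponent `p > 2` and all real `u₁, u₂`,
`(|u₁|^(p-2) u₁ - |u₂|^(p-2) u₂)(u₁ - u₂) ≥ 2^(1-p) |u₁ - u₂|^p`,
where powers are real (rpow) powers. -/
theorem monotone_power_nonlinearity_lower_bound
    (p : ℝ) (hp : 2 < p) (u₁ u₂ : ℝ) :
    (2 : ℝ) ^ (1 - p) * |u₁ - u₂| ^ p ≤
      (|u₁| ^ (p - 2) * u₁ - |u₂| ^ (p - 2) * u₂) * (u₁ - u₂) := by
  rcases le_total u₂ u₁ with h | h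
  · exact aux_main hp h
  · have e : (|u₁| ^ (p - 2) * u₁ - |u₂| ^ (p - 2) * u₂) * (u₁ - u₂) =
        (|u₂| ^ (p - 2) * u₂ - |u₁| ^ (p - 2) * u₁) * (u₂ - u₁) := by ring
    rw [abs_sub_comm, e]
    exact aux_main hp h
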